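/- Let V and W be finite abelian groups and b : V × V → W a biadditive map that is nondegenerate (b(u,V) = 0 implies u = 0, and b(V,v) = 0 implies v = 0) and satisfies that b(V,V) generates W. Define Cent(b) = {(f,h) ∈ End(V) × End(W) : b(f(u),v) = h(b(u,v)) = b(u,f(v)) for all u,v ∈ V}. Then Cent(b) is a commutative subring of End(V) × End(W), and both coordinate projections (f,h) ↦ f and (f,h) ↦ h are injective on Cent(b). -/

import Mathlib

/-- The centroid of a biadditive map `b : V × V → W`: all pairs `(f,h)` of additive
endomorphisms with `b(f u, v) = h (b u v) = b(u, f v)` for all `u, v`. -/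
def centroidSet {V W : Type*} [AddCommGroup V] [AddCommGroup W]
    (b : V →+ V →+ W) : Set (AddMonoid.End V × AddMonoid.End W) :=
  {x | ∀ u v : V, b (x.1 u) v = x.2 (b u v) ∧ x.2 (b u v) = b u (x.1 v)}

/-- Let `V`, `W` be finite abelian groups and `b : V × V → W` a biadditive
map which is nondegenerate and whose values generate `W`.  Then `Cent(b)` is a commutative
subring of `End(V) × End(W)`, and both coordinate projections are injective on it. -/
theorem centroid_commutative
    (V W : Type) [AddCommGroup V] [AddCommGroup W] [Finite V] [Finite W]
    (b : V →+ V →+ W)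
    (hndl : ∀ u : V, (∀ v : V, b u v = 0) → u = 0)
    (hndr : ∀ v : V, (∀ u : V, b u v = 0) → v = 0)
    (hgen : AddSubgroup.closure {w : W | ∃ u v : V, w = b u v} = ⊤) :
    (∃ S : Subring (AddMonoid.End V × AddMonoid.End W),
      (S : Set (AddMonoid.End V × AddMonoid.End W)) = centroidSet b) ∧
    (∀ x ∈ centroidSet b, ∀ y ∈ centroidSet b, x * y = y * x) ∧
    (∀ x ∈ centroidSet b, ∀ y ∈ centroidSet b, x.1 = y.1 → x = y) ∧
    (∀ x ∈ centroidSet b, ∀ y ∈ centroidSet b, x.2 = y.2 → x = y) := by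
  have mulV : ∀ (f g : AddMonoid.End V) (u : V), (f * g) u = f (g u) := fun _ _ _ => rfl
  have mulW : ∀ (f g : AddMonoid.End W) (w : W), (f * g) w = f (g w) := fun _ _ _ => rfl
  have addV : ∀ (f g : AddMonoid.End V) (u : V), (f + g) u = f u + g u := fun _ _ _ => rfl
  have addW : ∀ (f g : AddMonoid.End W) (w : W), (f + g) w = f w + g w := fun _ _ _ => rfl
  have negV : ∀ (f : AddMonoid.End V) (u : V), (-f) u = -(f u) := fun _ _ => rfl
  have negW : ∀ (f : AddMonoid.End W) (w : W), (-f) w = -(f w) := fun _ _ => rfl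
  -- two endomorphisms of W agreeing on the image of b agree everywhere
  have key : ∀ h k : AddMonoid.End W, (∀ u v : V, h (b u v) = k (b u v)) → h = k := by
    intro h k hhk
    refine DFunLike.ext _ _ fun w => ?_
    have hw : w ∈ AddSubgroup.closure {w : W | ∃ u v : V, w = b u v} := by
      rw [hgen]; trivial
    induction hw using AddSubgroup.closure_induction with
    | mem x hx => obtain ⟨u, v, rfl⟩ := hx; exact hhk u v
    | zero => simp
    | add x y _ _ hx hy => simp [map_add, hx, hy]
    | neg x _ hx => simp [map_neg, hx]
  -- left nondegeneracy rephrased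
  have keyV : ∀ a c : V, (∀ v : V, b a v = b c v) → a = c := by
    intro a c hac
    have : a - c = 0 := hndl _ (fun v => by simp [map_sub, hac v, sub_self])
    exact sub_eq_zero.mp this
  refine ⟨⟨{ carrier := centroidSet b
           , zero_mem' := by intro u v; simp [centroidSet]
           , one_mem' := by
               intro u v
               constructor <;> simp [AddMonoid.End.one_apply]
           , add_mem' := by
               intro x y hx hy u v
               obtain ⟨hx1, hx2⟩ := hx u v
               obtain ⟨hy1, hy2⟩ := hy u v
               constructor
               · rw [Prod.fst_add, Prod.snd_add, addV, addW, map_add,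
                   AddMonoidHom.add_apply, hx1, hy1]
               · rw [Prod.fst_add, Prod.snd_add, addV, addW, map_add, hx2, hy2]
           , neg_mem' := by
               intro x hx u v
               obtain ⟨hx1, hx2⟩ := hx u v
               constructor
               · rw [Prod.fst_neg, Prod.snd_neg, negV, negW, map_neg,
                   AddMonoidHom.neg_apply, hx1]
               · rw [Prod.fst_neg, Prod.snd_neg, negV, negW, map_neg, hx2]
           , mul_mem' := by
               intro x y hx hy u v
               have e1 : b ((x.1 * y.1) u) v = (x.2 * y.2) (b u v) := by
                 rw [mulV, mulW, (hx (y.1 u) v).1, (hy u v).1]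
               have e2 : (x.2 * y.2) (b u v) = b u ((x.1 * y.1) v) := by
                 rw [mulV, mulW, (hy u v).2, (hx u (y.1 v)).2]
               exact ⟨e1, e2⟩ }, rfl⟩, ?_, ?_, ?_⟩
  · -- commutativity
    intro x hx y hy
    have hsnd : x.2 * y.2 = y.2 * x.2 := by
      apply key
      intro u v
      rw [mulW, mulW, ← (hy u v).1, (hx (y.1 u) v).2, (hy u (x.1 v)).1, ← (hx u v).2]
    have hfst : x.1 * y.1 = y.1 * x.1 := by
      refine DFunLike.ext _ _ fun u => ?_
      apply keyV
      intro v
      have a1 : b ((x.1 * y.1) u) v = (x.2 * y.2) (b u v) := by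
        rw [mulV, mulW, (hx (y.1 u) v).1, (hy u v).1]
      have a2 : b ((y.1 * x.1) u) v = (y.2 * x.2) (b u v) := by
        rw [mulV, mulW, (hy (x.1 u) v).1, (hx u v).1]
      rw [a1, a2, hsnd]
    exact Prod.ext hfst hsnd
  · -- first projection injective
    intro x hx y hy h1
    refine Prod.ext h1 ?_
    apply key
    intro u v
    rw [← (hx u v).1, ← (hy u v).1, h1]
  · -- second projection injective
    intro x hx y hy h2
    refine Prod.ext ?_ h2
    refine DFunLike.ext _ _ fun u => ?_
    apply keyV
    intro v
    rw [(hx u v).1, (hy u v).1, h2]
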